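/- Let M be a locally compact, proper metric space (all closed balls compact) with bounded geometry. Then there exists a Borel measure μ on M such that for every R > 0: (i) sup_{x∈M} μ(B(x,R)) < ∞, and (ii) inf_{x∈M} μ(B(x,R)) > 0, where B(x,R) is the open ball of center x and radius R. -/

import Mathlib

open MeasureTheory Metric Set in
lemma count_ball_le' {M : Type*} [MetricSpace M] [MeasurableSpace M]
    [MeasurableSingletonClass M] (X : Set M) (r : ℝ) (B : ℕ)
    (h : ∀ y ∈ X, (X ∩ closedBall y (2*r)).Finite ∧ (X ∩ closedBall y (2*r)).ncard ≤ B)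
    (x : M) : Measure.count (ball x r ∩ X) ≤ B := by
  rcases (ball x r ∩ X).eq_empty_or_nonempty with he | ⟨y, hy⟩
  · simp [he]
  · have hsub : ball x r ∩ X ⊆ X ∩ closedBall y (2*r) := by
      rintro p ⟨hp, hpX⟩
      refine ⟨hpX, ?_⟩
      rw [mem_ball] at hp
      have h2 : dist y x < r := mem_ball.mp hy.1
      rw [mem_closedBall]
      have ht := dist_triangle p x y
      have hxy : dist x y = dist y x := dist_comm x y
      linarith
    obtain ⟨hfin, hcard⟩ := h y hy.2
    calc Measure.count (ball x r ∩ X) ≤ Measure.count (X ∩ closedBall y (2*r)) :=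
          measure_mono hsub
      _ = hfin.toFinset.card := Measure.count_apply_finite _ hfin
      _ ≤ (B : ℕ∞) := by
          rw [← Set.ncard_eq_toFinset_card _ hfin]
          exact_mod_cast hcard


open MeasureTheory Metric Set

/-- A subset `X` of a metric space is uniformly locally finite (as a metric subspace). -/
def IsULF {M : Type*} [PseudoMetricSpace M] (X : Set M) : Prop :=
  ∀ R > (0 : ℝ), ∃ N : ℕ, ∀ x ∈ X,
    (X ∩ Metric.closedBall x R).Finite ∧ (X ∩ Metric.closedBall x R).ncard ≤ N

/-- A subset `X ⊆ M` is `ε`-dense: every point of `M` lies at distance `< ε` from `X`. -/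
def IsEpsDense {M : Type*} [PseudoMetricSpace M] (ε : ℝ) (X : Set M) : Prop :=
  ∀ m : M, ∃ x ∈ X, dist m x < ε

/-- A metric space has bounded geometry if for every `ε > 0` there exists an `ε`-dense
uniformly locally finite subset. -/
def BoundedGeometry (M : Type*) [PseudoMetricSpace M] : Prop :=
  ∀ ε > (0 : ℝ), ∃ X : Set M, IsEpsDense ε X ∧ IsULF X

/-- Let `M` be a locally compact, proper metric space (all closed balls
compact) with bounded geometry. Then there is a Borel measure `μ` on `M` such that for every
`R > 0`, `sup_x μ(B(x,R)) < ∞` and `inf_x μ(B(x,R)) > 0`. -/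
theorem stmt_10 {M : Type*} [MetricSpace M] [ProperSpace M]
    [MeasurableSpace M] [BorelSpace M] (hM : BoundedGeometry M) :
    ∃ μ : MeasureTheory.Measure M, ∀ R > (0 : ℝ),
      (∃ C : ENNReal, C < ⊤ ∧ ∀ x : M, μ (Metric.ball x R) ≤ C) ∧
      (∃ c : ENNReal, 0 < c ∧ ∀ x : M, c ≤ μ (Metric.ball x R)) := by
  classical
  have h1 : ∀ k : ℕ, ∃ X : Set M, IsEpsDense (1/(k+1)) X ∧ IsULF X := fun k =>
    hM (1/(k+1)) (by positivity)
  choose X hdense hULF using h1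
  have h2 : ∀ k : ℕ, ∃ N : ℕ, ∀ y ∈ X k,
      (X k ∩ closedBall y (2*((k:ℝ)+1))).Finite ∧
      (X k ∩ closedBall y (2*((k:ℝ)+1))).ncard ≤ N :=
    fun k => hULF k (2*((k:ℝ)+1)) (by positivity)
  choose N hN using h2
  set w : ℕ → ENNReal := fun k => ((2:ENNReal)^k * ((N k : ENNReal) + 1))⁻¹ with hw
  have hwne : ∀ k, w k ≠ 0 := by
    intro k
    simp only [hw, ne_eq, ENNReal.inv_eq_zero]
    exact ENNReal.mul_ne_top (by simp) (by simp)
  have hwtop : ∀ k, w k ≠ ⊤ := by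
    intro k
    simp only [hw, ne_eq, ENNReal.inv_eq_top]
    simp
  have hwN : ∀ k, w k * ((N k : ENNReal) + 1) ≤ (2:ENNReal)⁻¹ ^ k := by
    intro k
    simp only [hw]
    rw [ENNReal.mul_inv (Or.inl (by simp)) (Or.inl (by simp)), mul_assoc,
      ENNReal.inv_mul_cancel (by simp) (by simp), mul_one, ← ENNReal.inv_pow]
  refine ⟨Measure.sum (fun k => w k • Measure.count.restrict (X k)), ?_⟩
  intro R hR
  have hball : ∀ (x : M), MeasurableSet (ball x R) := fun x => measurableSet_ball
  have happly : ∀ x : M,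
      (Measure.sum (fun k => w k • Measure.count.restrict (X k))) (ball x R)
      = ∑' k : ℕ, w k * Measure.count (ball x R ∩ X k) := by
    intro x
    rw [Measure.sum_apply _ (hball x)]
    congr 1; funext k
    rw [Measure.smul_apply, Measure.restrict_apply (hball x), smul_eq_mul]
  constructor
  · -- upper bound
    have h3 : ∀ k : ℕ, ∃ N' : ℕ, ∀ y ∈ X k,
        (X k ∩ closedBall y (2*R)).Finite ∧ (X k ∩ closedBall y (2*R)).ncard ≤ N' :=
      fun k => hULF k (2*R) (by positivity)
    choose N' hN' using h3
    set u : ℕ → ENNReal := fun k =>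
      if R ≤ (k:ℝ)+1 then (2:ENNReal)⁻¹ ^ k else w k * (N' k : ENNReal) with hu
    refine ⟨∑' k : ℕ, u k, ?_, ?_⟩
    · -- finiteness
      have hle : ∀ k : ℕ, u k ≤ (2:ENNReal)⁻¹ ^ k +
          (if R ≤ (k:ℝ)+1 then 0 else w k * (N' k : ENNReal)) := by
        intro k
        simp only [hu]
        by_cases h : R ≤ (k:ℝ)+1 <;> simp [h]
      calc (∑' k : ℕ, u k)
          ≤ ∑' k : ℕ, ((2:ENNReal)⁻¹ ^ k +
            (if R ≤ (k:ℝ)+1 then 0 else w k * (N' k : ENNReal))) :=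
            ENNReal.tsum_le_tsum hle
        _ = (∑' k : ℕ, (2:ENNReal)⁻¹ ^ k) +
            ∑' k : ℕ, (if R ≤ (k:ℝ)+1 then 0 else w k * (N' k : ENNReal)) :=
            ENNReal.tsum_add
        _ < ⊤ := by
            apply ENNReal.add_lt_top.mpr
            constructor
            · rw [ENNReal.tsum_geometric, lt_top_iff_ne_top, ne_eq, ENNReal.inv_eq_top,
                tsub_eq_zero_iff_le]
              exact fun h => absurd h (by simp [ENNReal.inv_lt_one, not_le])
            · have heq : (∑' k : ℕ, (if R ≤ (k:ℝ)+1 then 0 else w k * (N' k : ENNReal)))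
                  = ∑ k ∈ Finset.range ⌈R⌉₊,
                    (if R ≤ (k:ℝ)+1 then 0 else w k * (N' k : ENNReal)) := by
                apply tsum_eq_sum
                intro k hk
                have hk' : (⌈R⌉₊ : ℕ) ≤ k := le_of_not_gt (fun h => hk (Finset.mem_range.mpr h))
                have hR' : R ≤ (k:ℝ)+1 := by
                  have := Nat.le_ceil R
                  have : (⌈R⌉₊ : ℝ) ≤ (k:ℝ) := by exact_mod_cast hk'
                  linarith [Nat.le_ceil R]
                simp [hR']
              rw [heq]
              apply ENNReal.sum_lt_top.mpr
              intro k _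
              by_cases h : R ≤ (k:ℝ)+1
              · simp [h]
              · simp only [h, if_false]
                exact ENNReal.mul_lt_top (lt_top_iff_ne_top.mpr (hwtop k)) (by simp)
    · intro x
      rw [happly x]
      apply ENNReal.tsum_le_tsum
      intro k
      simp only [hu]
      by_cases h : R ≤ (k:ℝ)+1
      · simp only [h, if_true]
        have hcnt : Measure.count (ball x R ∩ X k) ≤ (N k : ENNReal) := by
          apply count_ball_le' (X k) R (N k) _ x
          intro y hy
          have hsub : X k ∩ closedBall y (2*R) ⊆ X k ∩ closedBall y (2*((k:ℝ)+1)) :=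
            inter_subset_inter_right _ (closedBall_subset_closedBall (by linarith))
          obtain ⟨hfin, hcard⟩ := hN k y hy
          exact ⟨hfin.subset hsub, le_trans (Set.ncard_le_ncard hsub hfin) hcard⟩
        calc w k * Measure.count (ball x R ∩ X k) ≤ w k * ((N k : ENNReal) + 1) :=
              mul_le_mul_right (le_trans hcnt (le_add_of_nonneg_right zero_le)) _
          _ ≤ (2:ENNReal)⁻¹ ^ k := hwN k
      · simp only [h, if_false]
        exact mul_le_mul_right (count_ball_le' (X k) R (N' k) (hN' k) x) _
  · -- lower bound
    set k := ⌈1/R⌉₊ with hk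
    refine ⟨w k, (hwne k).bot_lt, ?_⟩
    intro x
    obtain ⟨p, hpX, hpd⟩ := hdense k x
    have hkR : 1/((k:ℝ)+1) < R := by
      rw [div_lt_iff₀ (by positivity)]
      have h1 : 1/R ≤ (k:ℝ) := Nat.le_ceil _
      rw [div_le_iff₀ hR] at h1
      nlinarith
    have hp : p ∈ ball x R ∩ X k := ⟨mem_ball.mpr (by rw [dist_comm]; linarith), hpX⟩
    have hcnt : (1:ENNReal) ≤ Measure.count (ball x R ∩ X k) := by
      calc (1:ENNReal) = Measure.count ({p} : Set M) := (Measure.count_singleton p).symm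
        _ ≤ _ := measure_mono (singleton_subset_iff.mpr hp)
    rw [happly x]
    calc w k = w k * 1 := (mul_one _).symm
      _ ≤ w k * Measure.count (ball x R ∩ X k) := mul_le_mul_right hcnt _
      _ ≤ ∑' j : ℕ, w j * Measure.count (ball x R ∩ X j) := ENNReal.le_tsum k
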